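/- arXiv:1909.10132 — 3 statements merged into one kernel-verified Lean document; each statement's English description precedes it below -/
import Mathlib

section
/- Let A_b : ℝ^n → ℝ^b be a linear map and f(x) = (1/(2b)) * ‖y_b - A_b x‖₂². If (1/b) * ‖A_b z‖₂² ≤ (1 + δ) * ‖z‖₂² for all z in a subspace U, then for all x, x' with x - x' ∈ U: f(x') - f(x) - ⟨∇f(x), x' - x⟩ ≤ (1 + δ) * ‖x' - x‖₂². Moreover ⟨x' - x, ∇f(x') - ∇f(x)⟩ ≤ 2*(1+δ) * ‖x' - x‖₂². -/
open scoped RealInnerProductSpace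

lemma grad_aux (b n : ℕ) (hb : 0 < b)
    (Ab : EuclideanSpace ℝ (Fin n) →ₗ[ℝ] EuclideanSpace ℝ (Fin b))
    (yb : EuclideanSpace ℝ (Fin b)) (x : EuclideanSpace ℝ (Fin n)) :
    HasGradientAt (fun x => (1 / (2 * (b : ℝ))) * ‖yb - Ab x‖ ^ 2)
      (((b : ℝ)⁻¹) • (LinearMap.adjoint Ab) (Ab x - yb)) x := by
  set A := Ab.toContinuousLinearMap with hA
  have hF : HasFDerivAt (fun x : EuclideanSpace ℝ (Fin n) => yb - Ab x) (-A) x := by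
    have h0 := (hasFDerivAt_const yb x).sub A.hasFDerivAt
    rw [zero_sub] at h0
    exact h0
  have hinner := (hF.inner ℝ hF)
  have hmul := hinner.const_mul (1 / (2 * (b : ℝ)))
  have heq : (fun x : EuclideanSpace ℝ (Fin n) => (1 / (2 * (b : ℝ))) * ‖yb - Ab x‖ ^ 2)
      = fun x => (1 / (2 * (b : ℝ))) * ⟪yb - Ab x, yb - Ab x⟫ := by
    funext z; rw [real_inner_self_eq_norm_sq]
  rw [hasGradientAt_iff_hasFDerivAt, heq]
  convert hmul using 1
  case e'_9 => rfl
  ext h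
  have hb' : (b : ℝ) ≠ 0 := Nat.cast_ne_zero.mpr hb.ne'
  have hAh : (A h : EuclideanSpace ℝ (Fin b)) = Ab h := rfl
  simp only [InnerProductSpace.toDual_apply_apply, ContinuousLinearMap.smul_apply,
    ContinuousLinearMap.comp_apply, ContinuousLinearMap.prod_apply, fderivInnerCLM_apply,
    ContinuousLinearMap.neg_apply, real_inner_smul_left, LinearMap.adjoint_inner_left,
    smul_eq_mul, ← hA, hAh, inner_sub_left, inner_sub_right, inner_neg_left, inner_neg_right]
  rw [real_inner_comm (Ab h) yb, real_inner_comm (Ab h) (Ab x)]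
  field_simp
  ring

theorem stmt_6 (b n : ℕ) (hb : 0 < b) (δ : ℝ) (hδ : 0 ≤ δ)
    (Ab : EuclideanSpace ℝ (Fin n) →ₗ[ℝ] EuclideanSpace ℝ (Fin b))
    (yb : EuclideanSpace ℝ (Fin b))
    (U : Submodule ℝ (EuclideanSpace ℝ (Fin n)))
    (f : EuclideanSpace ℝ (Fin n) → ℝ)
    (hf : f = fun x => (1 / (2 * (b : ℝ))) * ‖yb - Ab x‖ ^ 2)
    (hTRIP : ∀ z ∈ U, (1 / (b : ℝ)) * ‖Ab z‖ ^ 2 ≤ (1 + δ) * ‖z‖ ^ 2) :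
    ∀ x x' : EuclideanSpace ℝ (Fin n), x - x' ∈ U →
      (f x' - f x - ⟪gradient f x, x' - x⟫ ≤ (1 + δ) * ‖x' - x‖ ^ 2) ∧
        ⟪x' - x, gradient f x' - gradient f x⟫ ≤ 2 * (1 + δ) * ‖x' - x‖ ^ 2 := by
  intro x x' hU
  have hb' : (b : ℝ) ≠ 0 := Nat.cast_ne_zero.mpr hb.ne'
  have hbpos : (0:ℝ) < b := Nat.cast_pos.mpr hb
  have hgrad : ∀ z, gradient f z = ((b : ℝ)⁻¹) • (LinearMap.adjoint Ab) (Ab z - yb) := by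
    intro z
    exact (hf ▸ grad_aux b n hb Ab yb z).gradient
  have hUmem : x' - x ∈ U := by
    have := U.neg_mem hU; simpa [neg_sub] using this
  have hTR := hTRIP (x' - x) hUmem
  have key : (1 / (b : ℝ)) * ‖Ab (x' - x)‖ ^ 2 ≤ (1 + δ) * ‖x' - x‖ ^ 2 := hTR
  constructor
  · -- f x' - f x - ⟪∇f x, x'-x⟫ = (1/(2b)) ‖Ab(x'-x)‖²
    have hid : f x' - f x - ⟪gradient f x, x' - x⟫
        = (1 / (2 * (b : ℝ))) * ‖Ab (x' - x)‖ ^ 2 := by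
      rw [hgrad x, hf]
      simp only [real_inner_smul_left, LinearMap.adjoint_inner_left]
      have e1 : ‖yb - Ab x'‖ ^ 2 = ⟪yb - Ab x', yb - Ab x'⟫ := (real_inner_self_eq_norm_sq _).symm
      have e2 : ‖yb - Ab x‖ ^ 2 = ⟪yb - Ab x, yb - Ab x⟫ := (real_inner_self_eq_norm_sq _).symm
      have e3 : ‖Ab x' - Ab x‖ ^ 2 = ⟪Ab x' - Ab x, Ab x' - Ab x⟫ := (real_inner_self_eq_norm_sq _).symm
      simp only [map_sub, e1, e2, e3]
      simp only [inner_sub_left, inner_sub_right]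
      rw [real_inner_comm (Ab x') yb, real_inner_comm (Ab x) yb,
        real_inner_comm (Ab x') (Ab x)]
      ring
    rw [hid]
    calc (1 / (2 * (b : ℝ))) * ‖Ab (x' - x)‖ ^ 2
        ≤ (1 / (b : ℝ)) * ‖Ab (x' - x)‖ ^ 2 := by
          apply mul_le_mul_of_nonneg_right _ (sq_nonneg _)
          rw [div_le_div_iff₀ (by linarith) hbpos]
          linarith
      _ ≤ (1 + δ) * ‖x' - x‖ ^ 2 := key
  · have hid : ⟪x' - x, gradient f x' - gradient f x⟫
        = (1 / (b : ℝ)) * ‖Ab (x' - x)‖ ^ 2 := by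
      simp only [hgrad, ← smul_sub]
      rw [real_inner_smul_right]
      have h2 : (Ab x' - yb) - (Ab x - yb) = Ab (x' - x) := by rw [map_sub]; abel
      rw [← map_sub (LinearMap.adjoint Ab), h2, LinearMap.adjoint_inner_right,
        real_inner_self_eq_norm_sq]
      field_simp
    rw [hid]
    calc (1 / (b : ℝ)) * ‖Ab (x' - x)‖ ^ 2 ≤ (1 + δ) * ‖x' - x‖ ^ 2 := key
      _ ≤ 2 * (1 + δ) * ‖x' - x‖ ^ 2 := by nlinarith [sq_nonneg ‖x' - x‖]
end

section
/- (Co-coercivity on a subspace) Let f : ℝ^n → ℝ be convex and differentiable, U a subspace of ℝ^n, P the orthogonal projection onto U, and ρ > 0. Suppose that for all w₁, w₂ ∈ U (as translates within the affine space through the points considered), f(w₁) - f(w₂) - ⟨∇f(w₂), w₁ - w₂⟩ ≤ (ρ/2) ‖w₁ - w₂‖². Then for all x, x' ∈ U: ‖P(∇f(x') - ∇f(x))‖² ≤ ρ * ⟨x' - x, ∇f(x') - ∇f(x)⟩. -/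
open scoped RealInnerProductSpace

variable {E : Type*} [NormedAddCommGroup E] [InnerProductSpace ℝ E] [CompleteSpace E]

lemma aux_first_order (f : E → ℝ) (hconv : ConvexOn ℝ Set.univ f)
    (hdiff : Differentiable ℝ f) (x y : E) :
    ⟪gradient f x, y - x⟫ ≤ f y - f x := by
  have h1 : HasDerivAt (fun t : ℝ => x + t • (y - x)) (y - x) 0 := by
    simpa using ((hasDerivAt_id (0:ℝ)).smul_const (y - x)).const_add x
  have h2 : HasDerivAt (fun t : ℝ => f (x + t • (y - x))) (fderiv ℝ f x (y - x)) 0 := by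
    have := (hdiff (x + (0:ℝ) • (y - x))).hasFDerivAt.comp_hasDerivAt 0 h1
    rw [zero_smul, add_zero] at this
    exact this
  have hφconv : ConvexOn ℝ Set.univ (fun t : ℝ => f (x + t • (y - x))) := by
    have := hconv.comp_affineMap (AffineMap.lineMap (k := ℝ) x y)
    rw [Set.preimage_univ] at this
    convert this using 2 with t
    rotate_left 4
    simp only [Function.comp_apply, AffineMap.lineMap_apply_module]
    congr 1
    module
    all_goals rfl
  have := hφconv.le_slope_of_hasDerivAt (Set.mem_univ (0:ℝ)) (Set.mem_univ 1) zero_lt_one h2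
  have hslope : slope (fun t : ℝ => f (x + t • (y - x))) 0 1 = f y - f x := by
    simp [slope_def_field]
  rw [hslope] at this
  have hg : ⟪gradient f x, y - x⟫ = fderiv ℝ f x (y - x) := by
    rw [gradient, InnerProductSpace.toDual_symm_apply]
  linarith [hg ▸ this]

lemma aux_half (n : ℕ) (f : EuclideanSpace ℝ (Fin n) → ℝ)
    (hconv : ConvexOn ℝ Set.univ f) (hdiff : Differentiable ℝ f)
    (U : Submodule ℝ (EuclideanSpace ℝ (Fin n)))
    (ρ : ℝ) (hρ : 0 < ρ)
    (hsmooth : ∀ w₁ ∈ U, ∀ w₂ ∈ U,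
      f w₁ - f w₂ - ⟪gradient f w₂, w₁ - w₂⟫ ≤ (ρ / 2) * ‖w₁ - w₂‖ ^ 2) :
    ∀ x ∈ U, ∀ x' ∈ U,
      ‖(Submodule.orthogonalProjectionOnto U (gradient f x' - gradient f x) :
          EuclideanSpace ℝ (Fin n))‖ ^ 2
        ≤ 2 * ρ * (f x' - f x - ⟪gradient f x, x' - x⟫) := by
  intro x hx x' hx'
  set g := gradient f x' - gradient f x with hg
  set p : EuclideanSpace ℝ (Fin n) := (Submodule.orthogonalProjectionOnto U g : EuclideanSpace ℝ (Fin n))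
    with hpdef
  have hpU : p ∈ U := Submodule.coe_mem _
  set w := x' - ρ⁻¹ • p with hw
  have hwU : w ∈ U := U.sub_mem hx' (U.smul_mem _ hpU)
  have h1 : ⟪gradient f x, w - x⟫ ≤ f w - f x := aux_first_order f hconv hdiff x w
  have h2 := hsmooth w hwU x' hx'
  have hwx' : w - x' = -(ρ⁻¹ • p) := by rw [hw]; abel
  have hwx : w - x = (x' - x) - ρ⁻¹ • p := by rw [hw]; abel
  have e1 : ⟪gradient f x', w - x'⟫ = -(ρ⁻¹ * ⟪gradient f x', p⟫) := by
    rw [hwx', inner_neg_right, real_inner_smul_right]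
  have e2 : ‖w - x'‖ ^ 2 = ρ⁻¹ ^ 2 * ‖p‖ ^ 2 := by
    rw [hwx', norm_neg, norm_smul, Real.norm_eq_abs, abs_of_pos (inv_pos.mpr hρ), mul_pow]
  have e3 : ⟪gradient f x, w - x⟫ = ⟪gradient f x, x' - x⟫ - ρ⁻¹ * ⟪gradient f x, p⟫ := by
    rw [hwx, inner_sub_right, real_inner_smul_right]
  have e4 : ⟪g, p⟫ = ‖p‖ ^ 2 := by
    have h := Submodule.inner_orthogonalProjectionOnto_eq_of_mem_left (K := U)
      (Submodule.orthogonalProjectionOnto U g) g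
    rw [Submodule.coe_inner] at h
    rw [real_inner_comm, ← h, real_inner_self_eq_norm_sq]
  have e5 : ⟪gradient f x', p⟫ - ⟪gradient f x, p⟫ = ‖p‖ ^ 2 := by
    rw [← inner_sub_left, ← hg, e4]
  have hinv : ρ * ρ⁻¹ = 1 := mul_inv_cancel₀ (ne_of_gt hρ)
  rw [e1, e2] at h2
  rw [e3] at h1
  have e5' : ρ⁻¹ * ⟪gradient f x', p⟫ - ρ⁻¹ * ⟪gradient f x, p⟫ = ρ⁻¹ * ‖p‖ ^ 2 := by
    rw [← mul_sub, e5]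
  have h7 : ρ / 2 * (ρ⁻¹ ^ 2 * ‖p‖ ^ 2) = ρ⁻¹ / 2 * ‖p‖ ^ 2 := by
    field_simp
  have h8 : ρ⁻¹ / 2 * ‖p‖ ^ 2 ≤ f x' - f x - ⟪gradient f x, x' - x⟫ := by linarith
  have h9 : 2 * ρ * (ρ⁻¹ / 2 * ‖p‖ ^ 2) = ‖p‖ ^ 2 := by field_simp
  have := mul_le_mul_of_nonneg_left h8 (by positivity : (0:ℝ) ≤ 2 * ρ)
  linarith

theorem stmt_8 (n : ℕ) (f : EuclideanSpace ℝ (Fin n) → ℝ)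
    (hconv : ConvexOn ℝ Set.univ f) (hdiff : Differentiable ℝ f)
    (U : Submodule ℝ (EuclideanSpace ℝ (Fin n)))
    (P : EuclideanSpace ℝ (Fin n) → EuclideanSpace ℝ (Fin n))
    (hP : P = fun v => (Submodule.orthogonalProjectionOnto U v : EuclideanSpace ℝ (Fin n)))
    (ρ : ℝ) (hρ : 0 < ρ)
    (hsmooth : ∀ w₁ ∈ U, ∀ w₂ ∈ U,
      f w₁ - f w₂ - ⟪gradient f w₂, w₁ - w₂⟫ ≤ (ρ / 2) * ‖w₁ - w₂‖ ^ 2) :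
    ∀ x ∈ U, ∀ x' ∈ U,
      ‖P (gradient f x' - gradient f x)‖ ^ 2
        ≤ ρ * ⟪x' - x, gradient f x' - gradient f x⟫ := by
  intro x hx x' hx'
  subst hP
  simp only
  have A := aux_half n f hconv hdiff U ρ hρ hsmooth x hx x' hx'
  have B := aux_half n f hconv hdiff U ρ hρ hsmooth x' hx' x hx
  have hneg : gradient f x - gradient f x' = -(gradient f x' - gradient f x) := by abel
  have hnorm : ‖(Submodule.orthogonalProjectionOnto U (gradient f x - gradient f x') :
      EuclideanSpace ℝ (Fin n))‖
      = ‖(Submodule.orthogonalProjectionOnto U (gradient f x' - gradient f x) :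
      EuclideanSpace ℝ (Fin n))‖ := by
    rw [hneg, map_neg, Submodule.coe_neg, norm_neg]
  rw [hnorm] at B
  set N := ‖(Submodule.orthogonalProjectionOnto U (gradient f x' - gradient f x) :
      EuclideanSpace ℝ (Fin n))‖ ^ 2 with hN
  have c1 : ⟪x' - x, gradient f x' - gradient f x⟫
      = ⟪gradient f x', x' - x⟫ - ⟪gradient f x, x' - x⟫ := by
    rw [real_inner_comm, inner_sub_left]
  have c2 : ⟪gradient f x', x - x'⟫ = -⟪gradient f x', x' - x⟫ := by
    rw [← inner_neg_right]
    congr 1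
    abel
  have key : (f x' - f x - ⟪gradient f x, x' - x⟫)
      + (f x - f x' - ⟪gradient f x', x - x'⟫)
      = ⟪x' - x, gradient f x' - gradient f x⟫ := by
    rw [c1, c2]; ring
  have h2N : 2 * N ≤ 2 * (ρ * ⟪x' - x, gradient f x' - gradient f x⟫) := by
    calc 2 * N ≤ 2 * ρ * (f x' - f x - ⟪gradient f x, x' - x⟫)
        + 2 * ρ * (f x - f x' - ⟪gradient f x', x - x'⟫) := by linarith
      _ = 2 * (ρ * ((f x' - f x - ⟪gradient f x, x' - x⟫)
          + (f x - f x' - ⟪gradient f x', x - x'⟫))) := by ring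
      _ = 2 * (ρ * ⟪x' - x, gradient f x' - gradient f x⟫) := by rw [key]
  linarith
end

section
/- (Second key contraction bound, Lemma 1b) With the same setup, assume (i) ⟨x'-x, ∇F(x') - ∇F(x)⟩ ≥ ρ⁻ ‖x'-x‖² and (ii) ‖∇f_i(x') - ∇f_i(x)‖ ≤ ρ⁺ ‖x' - x‖ for each i. Then E_i ‖x' - x - (μ/(M p(i))) (∇f_i(x') - ∇f_i(x))‖² ≤ (1 + μ² α ρ⁺ - 2μ ρ⁻) ‖x' - x‖², where α = max_i ρ⁺/(M p(i)). -/
open scoped RealInnerProductSpace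

theorem stmt_13 (M n : ℕ) (hM : 0 < M) (p : Fin M → ℝ) (hp : ∀ i, 0 < p i)
    (hsum : ∑ i, p i = 1)
    (f : Fin M → EuclideanSpace ℝ (Fin n) → ℝ)
    (hdiff : ∀ i, Differentiable ℝ (f i))
    (F : EuclideanSpace ℝ (Fin n) → ℝ)
    (hF : F = fun x => (1 / (M : ℝ)) * ∑ i, f i x)
    (x x' : EuclideanSpace ℝ (Fin n))
    (ρm ρp μ α : ℝ) (hρm : 0 < ρm) (hρp : 0 < ρp) (hμ : 0 < μ)
    (hα : IsGreatest (Set.range fun i => ρp / ((M : ℝ) * p i)) α)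
    (hsc : ⟪x' - x, gradient F x' - gradient F x⟫ ≥ ρm * ‖x' - x‖ ^ 2)
    (hlip : ∀ i, ‖gradient (f i) x' - gradient (f i) x‖ ≤ ρp * ‖x' - x‖) :
    ∑ i, p i * ‖x' - x - (μ / ((M : ℝ) * p i)) •
        (gradient (f i) x' - gradient (f i) x)‖ ^ 2
      ≤ (1 + μ ^ 2 * α * ρp - 2 * μ * ρm) * ‖x' - x‖ ^ 2 := by
  have hM' : (M : ℝ) ≠ 0 := Nat.cast_ne_zero.mpr hM.ne'
  have hMpos : (0:ℝ) < M := Nat.cast_pos.mpr hM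
  set d := x' - x with hd
  set g : Fin M → EuclideanSpace ℝ (Fin n) := fun i =>
    gradient (f i) x' - gradient (f i) x with hgdef
  -- gradient of F
  have hgradF : ∀ y, gradient F y = (1 / (M : ℝ)) • ∑ i, gradient (f i) y := by
    intro y
    have hfd : fderiv ℝ F y = (1 / (M : ℝ)) • ∑ i, fderiv ℝ (f i) y := by
      rw [hF]
      rw [fderiv_const_mul (by exact Differentiable.fun_sum (fun i _ => hdiff i) y)]
      congr 1
      exact fderiv_fun_sum (fun i _ => (hdiff i y))
    unfold gradient
    rw [hfd, map_smul, map_sum]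
  have hinner : ∑ i, ⟪d, g i⟫ = (M : ℝ) * ⟪d, gradient F x' - gradient F x⟫ := by
    have : gradient F x' - gradient F x = (1 / (M : ℝ)) • ∑ i, g i := by
      rw [hgradF, hgradF, ← smul_sub, ← Finset.sum_sub_distrib]
    rw [this, inner_smul_right, ← inner_sum]
    field_simp
  -- per-term expansion
  have hexp : ∀ i, p i * ‖d - (μ / ((M : ℝ) * p i)) • g i‖ ^ 2 =
      p i * ‖d‖ ^ 2 - (2 * μ / M) * ⟪d, g i⟫
        + (μ ^ 2 / ((M : ℝ) ^ 2 * p i)) * ‖g i‖ ^ 2 := by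
    intro i
    have hpi := hp i
    rw [norm_sub_sq_real, inner_smul_right, norm_smul]
    have : ‖μ / ((M : ℝ) * p i)‖ = μ / ((M : ℝ) * p i) := by
      rw [Real.norm_eq_abs, abs_of_pos (div_pos hμ (mul_pos hMpos hpi))]
    rw [this]
    field_simp
  rw [Finset.sum_congr rfl (fun i _ => hexp i)]
  rw [Finset.sum_add_distrib, Finset.sum_sub_distrib, ← Finset.sum_mul, hsum,
    ← Finset.mul_sum, hinner]
  have hquad : ∑ i, (μ ^ 2 / ((M : ℝ) ^ 2 * p i)) * ‖g i‖ ^ 2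
      ≤ μ ^ 2 * α * ρp * ‖d‖ ^ 2 := by
    have hαi : ∀ i, ρp / ((M : ℝ) * p i) ≤ α := fun i => hα.2 ⟨i, rfl⟩
    have hbound : ∀ i ∈ Finset.univ, (μ ^ 2 / ((M : ℝ) ^ 2 * p i)) * ‖g i‖ ^ 2
        ≤ (μ ^ 2 * α * ρp / M) * ‖d‖ ^ 2 := by
      intro i _
      have hpi := hp i
      have h1 : ‖g i‖ ^ 2 ≤ (ρp * ‖d‖) ^ 2 := by
        apply sq_le_sq' _ (hlip i)
        have := norm_nonneg (g i)
        nlinarith [hlip i]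
      calc (μ ^ 2 / ((M : ℝ) ^ 2 * p i)) * ‖g i‖ ^ 2
          ≤ (μ ^ 2 / ((M : ℝ) ^ 2 * p i)) * (ρp * ‖d‖) ^ 2 := by
            apply mul_le_mul_of_nonneg_left h1
            positivity
        _ = (μ ^ 2 * ρp / M) * (ρp / ((M : ℝ) * p i)) * ‖d‖ ^ 2 := by
            field_simp
        _ ≤ (μ ^ 2 * ρp / M) * α * ‖d‖ ^ 2 := by
            apply mul_le_mul_of_nonneg_right _ (by positivity)
            apply mul_le_mul_of_nonneg_left (hαi i) (by positivity)
        _ = (μ ^ 2 * α * ρp / M) * ‖d‖ ^ 2 := by ring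
    calc ∑ i, (μ ^ 2 / ((M : ℝ) ^ 2 * p i)) * ‖g i‖ ^ 2
        ≤ ∑ _i : Fin M, (μ ^ 2 * α * ρp / M) * ‖d‖ ^ 2 := Finset.sum_le_sum hbound
      _ = μ ^ 2 * α * ρp * ‖d‖ ^ 2 := by
          rw [Finset.sum_const, Finset.card_univ, Fintype.card_fin, nsmul_eq_mul]
          field_simp
  have hcross : 2 * μ / M * ((M : ℝ) * ⟪d, gradient F x' - gradient F x⟫)
      ≥ 2 * μ * ρm * ‖d‖ ^ 2 := by
    have h2 : 2 * μ / M * ((M : ℝ) * ⟪d, gradient F x' - gradient F x⟫)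
        = 2 * μ * ⟪d, gradient F x' - gradient F x⟫ := by field_simp
    rw [h2]
    have := mul_le_mul_of_nonneg_left hsc (by positivity : (0:ℝ) ≤ 2 * μ)
    linarith
  nlinarith [hquad, hcross]
end
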